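/- Let A and B be positive definite complex n×n matrices and let α, β ∈ [0,1]. Then A ♯_α B ≤ ((A ♯_α B) ♯_β A) ∇_α ((A ♯_α B) ♯_β B) ≤ A ∇_α B in the Loewner order. -/

import Mathlib

open Matrix ComplexOrder

/-- Real power of a matrix via the continuous functional calculus
(for a positive definite matrix this is the usual functional-calculus power). -/
noncomputable def mpow {n : ℕ} (A : Matrix (Fin n) (Fin n) ℂ) (t : ℝ) :
    Matrix (Fin n) (Fin n) ℂ :=
  cfc (fun x : ℝ => x ^ t) A

/-- The weighted geometric mean `A ♯ₜ B = A^{1/2} (A^{-1/2} B A^{-1/2})^t A^{1/2}`. -/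
noncomputable def gm {n : ℕ} (t : ℝ) (A B : Matrix (Fin n) (Fin n) ℂ) :
    Matrix (Fin n) (Fin n) ℂ :=
  mpow A (1/2) * mpow (mpow A (-(1/2)) * B * mpow A (-(1/2))) t * mpow A (1/2)

/-- The weighted arithmetic mean `A ∇ₜ B = (1-t)A + tB`. -/
noncomputable def am {n : ℕ} (t : ℝ) (A B : Matrix (Fin n) (Fin n) ℂ) :
    Matrix (Fin n) (Fin n) ℂ :=
  (1 - t) • A + t • B

/-- The weighted harmonic mean `A !ₜ B = ((1-t)A⁻¹ + tB⁻¹)⁻¹`. -/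
noncomputable def hm {n : ℕ} (t : ℝ) (A B : Matrix (Fin n) (Fin n) ℂ) :
    Matrix (Fin n) (Fin n) ℂ :=
  ((1 - t) • A⁻¹ + t • B⁻¹)⁻¹

/-- The Loewner order: `X ≤ Y` iff `Y - X` is positive semidefinite. -/
noncomputable def loewnerLE {n : ℕ} (X Y : Matrix (Fin n) (Fin n) ℂ) : Prop :=
  (Y - X).PosSemidef

open Polynomial
namespace Helper

variable {n : ℕ}

lemma contOn (f : ℝ → ℝ) (M : Matrix (Fin n) (Fin n) ℂ) :
    ContinuousOn f (spectrum ℝ M) :=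
  (Matrix.finite_real_spectrum (A := M)).continuousOn _

lemma spectrum_pos {M : Matrix (Fin n) (Fin n) ℂ} (hM : M.PosDef) :
    ∀ x ∈ spectrum ℝ M, 0 < x := by
  intro x hx
  rw [hM.isHermitian.spectrum_real_eq_range_eigenvalues] at hx
  obtain ⟨i, rfl⟩ := hx
  exact hM.eigenvalues_pos i

variable {M : Matrix (Fin n) (Fin n) ℂ}

lemma herm_sa (hM : M.IsHermitian) : IsSelfAdjoint M := hM

lemma cfc_posSemidef (hM : M.IsHermitian) (f : ℝ → ℝ)
    (hf : ∀ x ∈ spectrum ℝ M, 0 ≤ f x) : (cfc f M).PosSemidef := by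
  rw [hM.cfc_eq]
  unfold Matrix.IsHermitian.cfc
  rw [Unitary.conjStarAlgAut_apply, star_eq_conjTranspose]
  refine Matrix.PosSemidef.mul_mul_conjTranspose_same ?_ _
  refine Matrix.posSemidef_diagonal_iff.mpr fun i => ?_
  exact RCLike.ofReal_nonneg.mpr (hf _ (hM.eigenvalues_mem_spectrum_real i))

lemma posDef_conj {X E E' : Matrix (Fin n) (Fin n) ℂ} (hX : X.PosDef)
    (h1 : E * E' = 1) : (E * X * Eᴴ).PosDef := by
  rw [posDef_iff_dotProduct_mulVec]
  constructor
  · have : (E * X * Eᴴ)ᴴ = E * X * Eᴴ := by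
      calc (E * X * Eᴴ)ᴴ = Eᴴᴴ * Xᴴ * Eᴴ := by
            simp [conjTranspose_mul, mul_assoc]
        _ = E * X * Eᴴ := by rw [conjTranspose_conjTranspose, hX.1.eq]
    exact this
  · intro x hx
    have hinj : Eᴴ *ᵥ x ≠ 0 := by
      intro h
      apply hx
      have h2 : E'ᴴ * Eᴴ = 1 := by
        rw [← conjTranspose_mul, h1, conjTranspose_one]
      calc x = (E'ᴴ * Eᴴ) *ᵥ x := by rw [h2, one_mulVec]
        _ = E'ᴴ *ᵥ (Eᴴ *ᵥ x) := by rw [mulVec_mulVec]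
        _ = 0 := by rw [h, mulVec_zero]
    have := (posDef_iff_dotProduct_mulVec.mp hX).2 (x := Eᴴ *ᵥ x) hinj
    simpa only [star_mulVec, dotProduct_mulVec, vecMul_vecMul, conjTranspose_conjTranspose,
      mul_assoc] using this

lemma cfc_posDef (hM : M.PosDef) (f : ℝ → ℝ)
    (hf : ∀ x ∈ spectrum ℝ M, 0 < f x) : (cfc f M).PosDef := by
  rw [hM.isHermitian.cfc_eq]
  unfold Matrix.IsHermitian.cfc
  rw [Unitary.conjStarAlgAut_apply, star_eq_conjTranspose]
  refine posDef_conj ?_ (E' := (hM.isHermitian.eigenvectorUnitary : Matrix (Fin n) (Fin n) ℂ)ᴴ) ?_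
  · refine Matrix.posDef_diagonal_iff.mpr fun i => ?_
    exact RCLike.ofReal_pos.mpr (hf _ (hM.isHermitian.eigenvalues_mem_spectrum_real i))
  · rw [← star_eq_conjTranspose]
    exact Unitary.mul_star_self_of_mem (SetLike.coe_mem _)

lemma mpow_isHermitian (M : Matrix (Fin n) (Fin n) ℂ) (t : ℝ) : (mpow M t).IsHermitian :=
  cfc_predicate _ M

lemma mpow_posDef (hM : M.PosDef) (t : ℝ) : (mpow M t).PosDef :=
  cfc_posDef hM _ fun x hx => Real.rpow_pos_of_pos (spectrum_pos hM x hx) t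

lemma mpow_mul (hM : M.PosDef) (s t : ℝ) : mpow M s * mpow M t = mpow M (s + t) := by
  unfold mpow
  rw [← cfc_mul _ _ M (contOn _ M) (contOn _ M)]
  exact cfc_congr fun x hx => (Real.rpow_add (spectrum_pos hM x hx) s t).symm

lemma mpow_zero (hM : M.IsHermitian) : mpow M 0 = 1 := by
  unfold mpow
  have h1 : (fun x : ℝ => x ^ (0:ℝ)) = (1 : ℝ → ℝ) := by
    funext x; simp [Real.rpow_zero]
  rw [h1]
  exact cfc_one ℝ M (herm_sa hM)

lemma mpow_one (hM : M.PosDef) : mpow M 1 = M := by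
  unfold mpow
  have h1 : (fun x : ℝ => x ^ (1:ℝ)) = (id : ℝ → ℝ) := by
    funext x; simp [Real.rpow_one]
  rw [h1]
  exact cfc_id ℝ M (herm_sa hM.1)

lemma mpow_mpow (hM : M.PosDef) (s t : ℝ) : mpow (mpow M s) t = mpow M (s * t) := by
  unfold mpow
  rw [← cfc_comp' (fun x : ℝ => x ^ t) (fun x : ℝ => x ^ s) M
      (((Matrix.finite_real_spectrum (A := M)).image _).continuousOn _)
      (contOn _ M) (herm_sa hM.1)]
  exact cfc_congr fun x hx =>
    (Real.rpow_mul (spectrum_pos hM x hx).le s t).symm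

lemma aeval_semiconj (S T : Matrix (Fin n) (Fin n) ℂ) (q : ℝ[X]) :
    aeval (S * T) q * S = S * aeval (T * S) q := by
  induction q using Polynomial.induction_on' with
  | add p q hp hq => rw [map_add, map_add, add_mul, mul_add, hp, hq]
  | monomial k r =>
    rw [aeval_monomial, aeval_monomial]
    have hsc : SemiconjBy S (T * S) (S * T) := (mul_assoc S T S).symm
    have hpow := (hsc.pow_right k).eq
    calc algebraMap ℝ _ r * (S * T) ^ k * S
        = algebraMap ℝ _ r * (S * (T * S) ^ k) := by rw [mul_assoc, ← hpow]
      _ = S * (algebraMap ℝ _ r * (T * S) ^ k) := by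
          rw [← mul_assoc, Algebra.commutes r S, mul_assoc]

lemma cfc_eq_aeval (hM : M.IsHermitian) (f : ℝ → ℝ)
    (s : Finset ℝ) (hs : ∀ x ∈ spectrum ℝ M, x ∈ s) :
    cfc f M = aeval M (Lagrange.interpolate s id f) := by
  have h1 : cfc f M = cfc (fun x => (Lagrange.interpolate s id f).eval x) M :=
    cfc_congr fun x hx =>
      (Lagrange.eval_interpolate_at_node f (Set.injOn_id _) (hs x hx)).symm
  rw [h1]
  exact cfc_polynomial (Lagrange.interpolate s id f) M (herm_sa hM)

lemma mpow_semiconj {S T : Matrix (Fin n) (Fin n) ℂ} (hST : (S * T).IsHermitian)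
    (hTS : (T * S).IsHermitian) (t : ℝ) :
    mpow (S * T) t * S = S * mpow (T * S) t := by
  classical
  set F : Finset ℝ := (Matrix.finite_real_spectrum (A := S * T)).toFinset ∪
    (Matrix.finite_real_spectrum (A := T * S)).toFinset with hF
  unfold mpow
  rw [cfc_eq_aeval hST _ F (fun x hx => by simp [hF, hx]),
    cfc_eq_aeval hTS _ F (fun x hx => by simp [hF, hx])]
  exact aeval_semiconj S T _

/-- The key structural computation. -/
lemma gm_eq {A B : Matrix (Fin n) (Fin n) ℂ} (hA : A.PosDef) (hB : B.PosDef) (α β : ℝ) :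
    gm β (gm α A B) A =
      mpow A (1/2) * mpow (mpow A (-(1/2)) * B * mpow A (-(1/2))) (α*(1-β)) * mpow A (1/2) ∧
    gm β (gm α A B) B =
      mpow A (1/2) * mpow (mpow A (-(1/2)) * B * mpow A (-(1/2))) (α*(1-β)+β) * mpow A (1/2) ∧
    (gm α A B).PosDef := by
  set R := mpow A (1/2) with hRdef
  set R' := mpow A (-(1/2)) with hR'def
  set M := R' * B * R' with hMdef
  have hRpd : R.PosDef := mpow_posDef hA _
  have hR'pd : R'.PosDef := mpow_posDef hA _
  have hRh := (mpow_isHermitian A (1/2)).eq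
  have hR'h := (mpow_isHermitian A (-(1/2))).eq
  have hRR' : R * R' = 1 := by
    rw [hRdef, hR'def, mpow_mul hA, show (1/2 + -(1/2) : ℝ) = 0 by ring, mpow_zero hA.1]
  have hR'R : R' * R = 1 := by
    rw [hRdef, hR'def, mpow_mul hA, show (-(1/2) + 1/2 : ℝ) = 0 by ring, mpow_zero hA.1]
  have cRR' : ∀ X : Matrix (Fin n) (Fin n) ℂ, R * (R' * X) = X := fun X => by
    rw [← mul_assoc, hRR', one_mul]
  have cR'R : ∀ X : Matrix (Fin n) (Fin n) ℂ, R' * (R * X) = X := fun X => by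
    rw [← mul_assoc, hR'R, one_mul]
  have hMpd : M.PosDef := by
    have := posDef_conj hB hR'R
    rwa [hR'h] at this
  have hMh := hMpd.1.eq
  have hA2 : A = R * R := by
    rw [hRdef, mpow_mul hA, show (1/2 + 1/2 : ℝ) = 1 by ring, mpow_one hA]
  have hB2 : B = R * (M * R) := by
    rw [hMdef]
    simp only [mul_assoc, cRR']
    rw [← mul_assoc B R' R, mul_assoc B R' R, hR'R, mul_one]
  -- gm α A B
  have hG : gm α A B = R * mpow M α * R := rfl
  have hGpd : (gm α A B).PosDef := by
    rw [hG]
    have hE : (R * mpow M (α/2)) * (mpow M (-(α/2)) * R') = 1 := by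
      simp only [mul_assoc]
      rw [← mul_assoc (mpow M (α/2)) (mpow M (-(α/2))) R', mpow_mul hMpd,
        show (α/2 + -(α/2) : ℝ) = 0 by ring, mpow_zero hMpd.1, one_mul, hRR']
    have hmh : (mpow M (α/2))ᴴ = mpow M (α/2) := (mpow_isHermitian M (α/2)).eq
    have hRh2 : Rᴴ = R := (mpow_isHermitian A (1/2)).eq
    have hval : (R * mpow M (α/2)) * 1 * (R * mpow M (α/2))ᴴ = R * mpow M α * R := by
      rw [mul_one, conjTranspose_mul, hmh, hRh2]
      simp only [mul_assoc]
      rw [← mul_assoc (mpow M (α/2)) (mpow M (α/2)) R, mpow_mul hMpd,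
        show (α/2 + α/2 : ℝ) = α by ring]
    have := posDef_conj Matrix.PosDef.one hE
    rwa [hval] at this
  set G := gm α A B with hGdef
  set H := mpow G (1/2) with hHdef
  set H' := mpow G (-(1/2)) with hH'def
  have hHpd : H.PosDef := mpow_posDef hGpd _
  have hH'pd : H'.PosDef := mpow_posDef hGpd _
  have hHH' : H * H' = 1 := by
    rw [hHdef, hH'def, mpow_mul hGpd, show (1/2 + -(1/2) : ℝ) = 0 by ring, mpow_zero hGpd.1]
  have hH'H : H' * H = 1 := by
    rw [hHdef, hH'def, mpow_mul hGpd, show (-(1/2) + 1/2 : ℝ) = 0 by ring, mpow_zero hGpd.1]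
  have cHH' : ∀ X : Matrix (Fin n) (Fin n) ℂ, H * (H' * X) = X := fun X => by
    rw [← mul_assoc, hHH', one_mul]
  have cH'H : ∀ X : Matrix (Fin n) (Fin n) ℂ, H' * (H * X) = X := fun X => by
    rw [← mul_assoc, hH'H, one_mul]
  have hHHG : H * H = G := by
    rw [hHdef, mpow_mul hGpd, show (1/2 + 1/2 : ℝ) = 1 by ring, mpow_one hGpd]
  have hH'2 : H' * H' = mpow G (-1) := by
    rw [hH'def, mpow_mul hGpd]; norm_num
  -- inverse of G in terms of M
  have hGinv : mpow G (-1) = R' * (mpow M (-α) * R') := by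
    have e1 : mpow G (-1) * G = 1 := by
      have := mpow_mul hGpd (-1) 1
      rw [mpow_one hGpd, show (-1 + 1 : ℝ) = 0 by ring, mpow_zero hGpd.1] at this
      exact this
    have e2 : G * (R' * (mpow M (-α) * R')) = 1 := by
      rw [hG]
      simp only [mul_assoc]
      rw [cRR' (mpow M (-α) * R'), ← mul_assoc (mpow M α) (mpow M (-α)) R',
        mpow_mul hMpd, show (α + -α : ℝ) = 0 by ring, mpow_zero hMpd.1, one_mul, hRR']
    calc mpow G (-1) = mpow G (-1) * (G * (R' * (mpow M (-α) * R'))) := by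
          rw [e2, mul_one]
      _ = (mpow G (-1) * G) * (R' * (mpow M (-α) * R')) := by rw [mul_assoc]
      _ = R' * (mpow M (-α) * R') := by rw [e1, one_mul]
  have TSgen : ∀ X : Matrix (Fin n) (Fin n) ℂ,
      R * (H' * (H' * (R * X))) = mpow M (-α) * X := fun X => by
    rw [← mul_assoc H' H' (R * X), hH'2, hGinv]
    simp only [mul_assoc]
    rw [cRR', cR'R]
  have TS : (R * H') * (H' * R) = mpow M (-α) := by
    have h := TSgen 1
    rw [mul_one, mul_one] at h
    simp only [mul_assoc]
    exact h
  -- part 1 : gm β G A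
  have argEqA : H' * A * H' = (H' * R) * (R * H') := by
    rw [hA2]; simp only [mul_assoc]
  have hermA : ((H' * R) * (R * H')).IsHermitian := by
    rw [← argEqA]
    have hH'h : H'ᴴ = H' := (mpow_isHermitian G (-(1/2))).eq
    have := posDef_conj hA (E := H') (E' := H) hH'H
    rw [hH'h] at this
    exact this.1
  have hermA' : ((R * H') * (H' * R)).IsHermitian := by
    rw [TS]; exact mpow_isHermitian M (-α)
  have keyA := mpow_semiconj hermA hermA' β
  have hc : (H' * R) * (R' * H) = 1 := by
    simp only [mul_assoc]
    rw [cRR', hH'H]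
  have eA : mpow (H' * A * H') β = H' * (R * (mpow M (-α * β) * (R' * H))) := by
    rw [argEqA]
    calc mpow ((H' * R) * (R * H')) β
        = mpow ((H' * R) * (R * H')) β * ((H' * R) * (R' * H)) := by rw [hc, mul_one]
      _ = (mpow ((H' * R) * (R * H')) β * (H' * R)) * (R' * H) := by rw [← mul_assoc]
      _ = ((H' * R) * mpow ((R * H') * (H' * R)) β) * (R' * H) := by rw [keyA]
      _ = ((H' * R) * mpow (mpow M (-α)) β) * (R' * H) := by rw [TS]
      _ = ((H' * R) * mpow M (-α * β)) * (R' * H) := by rw [mpow_mpow hMpd]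
      _ = H' * (R * (mpow M (-α * β) * (R' * H))) := by simp only [mul_assoc]
  have part1 : gm β G A = R * mpow M (α * (1 - β)) * R := by
    have hd : gm β G A = H * mpow (H' * A * H') β * H := rfl
    rw [hd, eA]
    simp only [mul_assoc]
    rw [cHH', hHHG, hG]
    simp only [mul_assoc]
    rw [cR'R, ← mul_assoc (mpow M (-α * β)) (mpow M α) R, mpow_mul hMpd,
      show (-α * β + α : ℝ) = α * (1 - β) by ring]
  -- part 2 : gm β G B
  set m := mpow M (1/2) with hmdef
  set m' := mpow M (-(1/2)) with hm'def
  have hmm' : m * m' = 1 := by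
    rw [hmdef, hm'def, mpow_mul hMpd, show (1/2 + -(1/2) : ℝ) = 0 by ring, mpow_zero hMpd.1]
  have cmm' : ∀ X : Matrix (Fin n) (Fin n) ℂ, m * (m' * X) = X := fun X => by
    rw [← mul_assoc, hmm', one_mul]
  have hm2 : M = m * m := by
    rw [hmdef, mpow_mul hMpd, show (1/2 + 1/2 : ℝ) = 1 by ring, mpow_one hMpd]
  have argEqB : H' * B * H' = (H' * (R * m)) * (m * (R * H')) := by
    rw [hB2]
    nth_rewrite 1 [hm2]
    simp only [mul_assoc]
  have TSB : (m * (R * H')) * (H' * (R * m)) = mpow M (1 - α) := by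
    simp only [mul_assoc]
    rw [TSgen m, ← mul_assoc m (mpow M (-α)) m, mpow_mul hMpd, mpow_mul hMpd,
      show (1/2 + -α + 1/2 : ℝ) = 1 - α by ring]
  have hermB : ((H' * (R * m)) * (m * (R * H'))).IsHermitian := by
    rw [← argEqB]
    have hH'h : H'ᴴ = H' := (mpow_isHermitian G (-(1/2))).eq
    have := posDef_conj hB (E := H') (E' := H) hH'H
    rw [hH'h] at this
    exact this.1
  have hermB' : ((m * (R * H')) * (H' * (R * m))).IsHermitian := by
    rw [TSB]; exact mpow_isHermitian M (1 - α)
  have keyB := mpow_semiconj hermB hermB' β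
  have hcB : (H' * (R * m)) * (m' * (R' * H)) = 1 := by
    simp only [mul_assoc]
    rw [cmm', cRR', hH'H]
  have eB : mpow (H' * B * H') β =
      (H' * (R * m)) * (mpow M ((1 - α) * β) * (m' * (R' * H))) := by
    rw [argEqB]
    calc mpow ((H' * (R * m)) * (m * (R * H'))) β
        = mpow ((H' * (R * m)) * (m * (R * H'))) β * ((H' * (R * m)) * (m' * (R' * H))) := by
          rw [hcB, mul_one]
      _ = (mpow ((H' * (R * m)) * (m * (R * H'))) β * (H' * (R * m))) * (m' * (R' * H)) := by
          rw [← mul_assoc]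
      _ = ((H' * (R * m)) * mpow ((m * (R * H')) * (H' * (R * m))) β) * (m' * (R' * H)) := by
          rw [keyB]
      _ = ((H' * (R * m)) * mpow (mpow M (1 - α)) β) * (m' * (R' * H)) := by rw [TSB]
      _ = ((H' * (R * m)) * mpow M ((1 - α) * β)) * (m' * (R' * H)) := by rw [mpow_mpow hMpd]
      _ = (H' * (R * m)) * (mpow M ((1 - α) * β) * (m' * (R' * H))) := by
          simp only [mul_assoc]
  have part2 : gm β G B = R * mpow M (α * (1 - β) + β) * R := by
    have hd2 : gm β G B = H * mpow (H' * B * H') β * H := rfl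
    rw [hd2, eB]
    simp only [mul_assoc]
    rw [cHH', hHHG, hG]
    simp only [mul_assoc]
    rw [cR'R, ← mul_assoc m' (mpow M α) R, mpow_mul hMpd,
      ← mul_assoc (mpow M ((1 - α) * β)) (mpow M (-(1/2) + α)) R, mpow_mul hMpd,
      ← mul_assoc m (mpow M ((1 - α) * β + (-(1/2) + α))) R, mpow_mul hMpd,
      show (1/2 + ((1 - α) * β + (-(1/2) + α)) : ℝ) = α * (1 - β) + β by ring,
      ← mul_assoc]
  exact ⟨part1, part2, hGpd⟩

end Helper

namespace Helper

variable {n : ℕ} {M : Matrix (Fin n) (Fin n) ℂ}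

lemma bern {x t : ℝ} (hx : 0 < x) (ht0 : 0 ≤ t) (ht1 : t ≤ 1) :
    x ^ t ≤ (1 - t) + t * x := by
  have h := Real.geom_mean_le_arith_mean2_weighted (by linarith : (0:ℝ) ≤ 1 - t) ht0
    zero_le_one hx.le (by ring)
  simpa using h

lemma scalar1 {x α β : ℝ} (hx : 0 < x) (hα : α ∈ Set.Icc (0:ℝ) 1)
    (hβ : β ∈ Set.Icc (0:ℝ) 1) :
    x ^ α ≤ (1 - α) * x ^ (α * (1 - β)) + α * x ^ (α * (1 - β) + β) := by
  obtain ⟨hα0, hα1⟩ := hα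
  obtain ⟨hβ0, hβ1⟩ := hβ
  have hb : (x ^ β) ^ α ≤ (1 - α) + α * x ^ β :=
    bern (Real.rpow_pos_of_pos hx β) hα0 hα1
  have h1 : x ^ α = x ^ (α * (1 - β)) * (x ^ β) ^ α := by
    rw [← Real.rpow_mul hx.le, ← Real.rpow_add hx]
    ring_nf
  have h2 : x ^ (α * (1 - β) + β) = x ^ (α * (1 - β)) * x ^ β :=
    Real.rpow_add hx _ _
  have hpos : (0:ℝ) < x ^ (α * (1 - β)) := Real.rpow_pos_of_pos hx _
  calc x ^ α = x ^ (α * (1 - β)) * (x ^ β) ^ α := h1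
    _ ≤ x ^ (α * (1 - β)) * ((1 - α) + α * x ^ β) := by
        exact mul_le_mul_of_nonneg_left hb hpos.le
    _ = (1 - α) * x ^ (α * (1 - β)) + α * x ^ (α * (1 - β) + β) := by
        rw [h2]; ring

lemma scalar2 {x α β : ℝ} (hx : 0 < x) (hα : α ∈ Set.Icc (0:ℝ) 1)
    (hβ : β ∈ Set.Icc (0:ℝ) 1) :
    (1 - α) * x ^ (α * (1 - β)) + α * x ^ (α * (1 - β) + β) ≤ (1 - α) + α * x := by
  obtain ⟨hα0, hα1⟩ := hα
  obtain ⟨hβ0, hβ1⟩ := hβ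
  have hγ0 : 0 ≤ α * (1 - β) := by nlinarith
  have hγ1 : α * (1 - β) ≤ 1 := by nlinarith
  have hδ0 : 0 ≤ α * (1 - β) + β := by nlinarith
  have hδ1 : α * (1 - β) + β ≤ 1 := by nlinarith
  have h1 := bern hx hγ0 hγ1
  have h2 := bern hx hδ0 hδ1
  nlinarith [h1, h2]

lemma combo_cfc (hM : M.PosDef) (c d r s : ℝ) :
    cfc (fun x : ℝ => c * x ^ r + d * x ^ s) M = c • mpow M r + d • mpow M s := by
  rw [cfc_add (a := M) (f := fun x : ℝ => c * x ^ r) (g := fun x : ℝ => d * x ^ s)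
    (contOn _ M) (contOn _ M), cfc_const_mul c _ M (contOn _ M),
    cfc_const_mul d _ M (contOn _ M)]
  rfl

lemma affine_cfc (hM : M.PosDef) (c d : ℝ) :
    cfc (fun x : ℝ => c + d * x) M = c • (1 : Matrix (Fin n) (Fin n) ℂ) + d • M := by
  rw [cfc_const_add c _ M (contOn _ M) (herm_sa hM.1),
    cfc_const_mul_id d M (herm_sa hM.1), Algebra.algebraMap_eq_smul_one]

lemma sub_psd (hM : M.PosDef) (f g : ℝ → ℝ) (hle : ∀ x ∈ spectrum ℝ M, g x ≤ f x) :
    (cfc f M - cfc g M).PosSemidef := by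
  rw [← cfc_sub f g M (contOn _ M) (contOn _ M)]
  exact cfc_posSemidef hM.1 _ fun x hx => sub_nonneg.mpr (hle x hx)

lemma herm_conj_psd {Z E : Matrix (Fin n) (Fin n) ℂ} (hZ : Z.PosSemidef) (hE : Eᴴ = E) :
    (E * Z * E).PosSemidef := by
  have := hZ.mul_mul_conjTranspose_same E
  rwa [hE] at this

end Helper

open Helper in
/-- Refined arithmetic–geometric mean inequality:
`A ♯_α B ≤ ((A ♯_α B) ♯_β A) ∇_α ((A ♯_α B) ♯_β B) ≤ A ∇_α B`. -/
theorem stmt5 {n : ℕ} (A B : Matrix (Fin n) (Fin n) ℂ) (hA : A.PosDef) (hB : B.PosDef)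
    (α β : ℝ) (hα : α ∈ Set.Icc (0 : ℝ) 1) (hβ : β ∈ Set.Icc (0 : ℝ) 1) :
    loewnerLE (gm α A B) (am α (gm β (gm α A B) A) (gm β (gm α A B) B)) ∧
    loewnerLE (am α (gm β (gm α A B) A) (gm β (gm α A B) B)) (am α A B) := by
  obtain ⟨h1, h2, hGpd⟩ := gm_eq hA hB α β
  set R := mpow A (1/2) with hRdef
  set R' := mpow A (-(1/2)) with hR'def
  set M := R' * B * R' with hMdef
  have hRh : Rᴴ = R := (mpow_isHermitian A (1/2)).eq
  have hR'h : R'ᴴ = R' := (mpow_isHermitian A (-(1/2))).eq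
  have hRR' : R * R' = 1 := by
    rw [hRdef, hR'def, mpow_mul hA, show (1/2 + -(1/2) : ℝ) = 0 by ring, mpow_zero hA.1]
  have hR'R : R' * R = 1 := by
    rw [hRdef, hR'def, mpow_mul hA, show (-(1/2) + 1/2 : ℝ) = 0 by ring, mpow_zero hA.1]
  have hMpd : M.PosDef := by
    have := posDef_conj hB hR'R
    rwa [hR'h] at this
  have hA2 : A = R * R := by
    rw [hRdef, mpow_mul hA, show (1/2 + 1/2 : ℝ) = 1 by ring, mpow_one hA]
  have hB2 : B = R * (M * R) := by
    rw [hMdef]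
    simp only [mul_assoc]
    rw [← mul_assoc R R' _, hRR', one_mul, ← mul_assoc B R' R, mul_assoc B R' R,
      hR'R, mul_one]
  have hGm : gm α A B = R * mpow M α * R := rfl
  -- the middle term
  have hmid : am α (gm β (gm α A B) A) (gm β (gm α A B) B)
      = R * ((1 - α) • mpow M (α * (1 - β)) + α • mpow M (α * (1 - β) + β)) * R := by
    show (1 - α) • (gm β (gm α A B) A) + α • (gm β (gm α A B) B) = _
    rw [h1, h2]
    simp only [Matrix.mul_add, Matrix.add_mul, mul_smul_comm, smul_mul_assoc]
  have hamAB : am α A B = R * ((1 - α) • (1 : Matrix (Fin n) (Fin n) ℂ) + α • M) * R := by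
    show (1 - α) • A + α • B = _
    simp only [Matrix.mul_add, Matrix.add_mul, mul_smul_comm, smul_mul_assoc, Matrix.mul_one]
    rw [← hA2]
    rw [hB2]
    simp only [mul_assoc]
  -- positivity of the two brackets
  have hz1 : (((1 - α) • mpow M (α * (1 - β)) + α • mpow M (α * (1 - β) + β))
      - mpow M α).PosSemidef := by
    rw [← combo_cfc hMpd (1 - α) α (α * (1 - β)) (α * (1 - β) + β)]
    exact sub_psd hMpd _ _ fun x hx => scalar1 (spectrum_pos hMpd x hx) hα hβ
  have hz2 : (((1 - α) • (1 : Matrix (Fin n) (Fin n) ℂ) + α • M)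
      - ((1 - α) • mpow M (α * (1 - β)) + α • mpow M (α * (1 - β) + β))).PosSemidef := by
    rw [← combo_cfc hMpd (1 - α) α (α * (1 - β)) (α * (1 - β) + β),
      ← affine_cfc hMpd (1 - α) α]
    exact sub_psd hMpd _ _ fun x hx => scalar2 (spectrum_pos hMpd x hx) hα hβ
  constructor
  · show (am α (gm β (gm α A B) A) (gm β (gm α A B) B) - gm α A B).PosSemidef
    rw [hmid, hGm, ← Matrix.sub_mul, ← Matrix.mul_sub]
    exact herm_conj_psd hz1 hRh
  · show (am α A B - am α (gm β (gm α A B) A) (gm β (gm α A B) B)).PosSemidef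
    rw [hmid, hamAB, ← Matrix.sub_mul, ← Matrix.mul_sub]
    exact herm_conj_psd hz2 hRh
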